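/- arXiv:2405.10224 — 3 statements merged into one kernel-verified Lean document; each statement's English description precedes it below -/
import Mathlib

section
/- Let g ≥ 1, 0 < c < 1 and 0 < ε < 1. Let J be the (2g+1)×(2g+1) antidiagonal matrix, let n ∈ SL_{2g+1}(ℝ) be a lower-triangular unipotent matrix with n·(JnᵀJ) = 1, and let t = diag(t₁^{−1}, …, t_g^{−1}, 1, t_g, …, t₁) where t₁,…,t_g > 0 satisfy t_i/t_{i+1} > c for 1 ≤ i ≤ g−1 and t_g > c. Define the inner product H on ℝ^{2g+1} by H(v,w) = ⟨(nt)^{−1}v, (nt)^{−1}w⟩, where ⟨·,·⟩ is the standard inner product. If there exists a nonzero vector w ∈ ℤ^{2g+1} with H(w,w)^{1/2} < c^g·ε, then t₁ > 1/ε. -/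
set_option maxHeartbeats 1000000 in
theorem stmt_4 (g : ℕ) (hg : 1 ≤ g) (c ε : ℝ) (hc0 : 0 < c) (hc1 : c < 1)
    (hε0 : 0 < ε) (hε1 : ε < 1)
    (J : Matrix (Fin (2*g+1)) (Fin (2*g+1)) ℝ)
    (hJ : ∀ i j, J i j = if (i:ℕ) + (j:ℕ) = 2*g then 1 else 0)
    (n : Matrix (Fin (2*g+1)) (Fin (2*g+1)) ℝ)
    (hn_lower : ∀ i j : Fin (2*g+1), i < j → n i j = 0)
    (hn_diag : ∀ i, n i i = 1)
    (hn_det : n.det = 1)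
    (hnG : n * (J * n.transpose * J) = 1)
    (t : ℕ → ℝ)
    (ht_pos : ∀ i, 1 ≤ i → i ≤ g → 0 < t i)
    (ht_ratio : ∀ i, 1 ≤ i → i ≤ g - 1 → t i / t (i+1) > c)
    (ht_g : t g > c)
    (d : Fin (2*g+1) → ℝ)
    (hd : ∀ k : Fin (2*g+1), d k = if (k:ℕ) < g then (t ((k:ℕ)+1))⁻¹
          else if (k:ℕ) = g then 1 else t (2*g+1 - (k:ℕ)))
    (H : (Fin (2*g+1) → ℝ) → (Fin (2*g+1) → ℝ) → ℝ)
    (hH : ∀ v w, H v w = dotProduct (Matrix.mulVec (n * Matrix.diagonal d)⁻¹ v)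
          (Matrix.mulVec (n * Matrix.diagonal d)⁻¹ w))
    (w : Fin (2*g+1) → ℤ) (hw : w ≠ 0)
    (hshort : Real.sqrt (H (fun i => (w i : ℝ)) (fun i => (w i : ℝ))) < c^g * ε) :
    t 1 > 1/ε := by
  have hcg0 : (0:ℝ) < c^g := pow_pos hc0 g
  -- lower bound for t i
  have cpow_lt_t : ∀ i, 1 ≤ i → i ≤ g → c^(g+1-i) < t i := by
    have aux : ∀ j, j ≤ g - 1 → c^(j+1) < t (g - j) := by
      intro j
      induction j with
      | zero => intro _; simpa using ht_g
      | succ j ih =>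
        intro hj
        have hj' : j ≤ g - 1 := Nat.le_of_succ_le hj
        have hr := ht_ratio (g - (j+1)) (by omega) (by omega)
        have heq : g - (j+1) + 1 = g - j := by omega
        rw [heq] at hr
        have htpos : 0 < t (g - j) := ht_pos _ (by omega) (by omega)
        have hlt : c * t (g - j) < t (g - (j+1)) := by
          rw [gt_iff_lt, lt_div_iff₀ htpos] at hr
          linarith
        have hih := ih hj'
        calc c^(j+1+1) = c * c^(j+1) := by ring
          _ < c * t (g - j) := by nlinarith
          _ < t (g - (j+1)) := hlt
    intro i h1 h2
    have h := aux (g - i) (by omega)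
    have e1 : g - (g - i) = i := by omega
    have e2 : g - i + 1 = g + 1 - i := by omega
    rw [e1, e2] at h
    exact h
  -- upper bound: c^(i-1) * t i ≤ t 1
  have t_le : ∀ i, 1 ≤ i → i ≤ g → c^(i-1) * t i ≤ t 1 := by
    intro i
    induction i with
    | zero => intro h; omega
    | succ i ih =>
      intro _ hle
      rcases Nat.eq_zero_or_pos i with h0 | hpos
      · subst h0; simp
      · have hr := ht_ratio i hpos (by omega)
        have htpos : 0 < t (i+1) := ht_pos _ (by omega) hle
        have hlt : c * t (i+1) < t i := by
          rw [gt_iff_lt, lt_div_iff₀ htpos] at hr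
          linarith
        have h2 := ih hpos (by omega)
        have hpow : c^i = c^(i-1) * c := by
          rw [← pow_succ]
          congr 1
          omega
        have hpowpos : (0:ℝ) < c^(i-1) := pow_pos hc0 _
        calc c^(i+1-1) * t (i+1) = c^(i-1) * (c * t (i+1)) := by
              rw [Nat.add_sub_cancel, hpow]; ring
          _ ≤ c^(i-1) * t i := by nlinarith
          _ ≤ t 1 := h2
  -- positivity of d
  have hdpos : ∀ k : Fin (2*g+1), 0 < d k := by
    intro k
    rw [hd k]
    split_ifs with h1 h2
    · exact inv_pos.mpr (ht_pos _ (by omega) (by omega))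
    · norm_num
    · have hk : (k:ℕ) < 2*g+1 := k.isLt
      exact ht_pos _ (by omega) (by omega)
  -- matrix facts
  have hnu : IsUnit n.det := by rw [hn_det]; exact isUnit_one
  have hni : n * n⁻¹ = 1 := Matrix.mul_nonsing_inv n hnu
  set W : Fin (2*g+1) → ℝ := fun i => (w i : ℝ) with hW
  set x : Fin (2*g+1) → ℝ := Matrix.mulVec n⁻¹ W with hx
  set u : Fin (2*g+1) → ℝ := Matrix.mulVec (n * Matrix.diagonal d)⁻¹ W with hu
  have hMinv : (n * Matrix.diagonal d)⁻¹ = (Matrix.diagonal d)⁻¹ * n⁻¹ :=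
    Matrix.mul_inv_rev _ _
  have hDinv : (Matrix.diagonal d)⁻¹ = Matrix.diagonal (fun k => (d k)⁻¹) := by
    apply Matrix.inv_eq_right_inv
    rw [Matrix.diagonal_mul_diagonal]
    have hfun : (fun i => d i * (d i)⁻¹) = fun _ => (1:ℝ) :=
      funext fun i => mul_inv_cancel₀ (ne_of_gt (hdpos i))
    rw [hfun, Matrix.diagonal_one]
  have hu_eq : ∀ k, u k = (d k)⁻¹ * x k := by
    intro k
    rw [hu, hMinv, hDinv, ← Matrix.mulVec_mulVec, Matrix.mulVec_diagonal]
  have hnx : Matrix.mulVec n x = W := by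
    rw [hx, Matrix.mulVec_mulVec, hni, Matrix.one_mulVec]
  -- minimal index with nonzero coordinate
  have hSne : (Finset.univ.filter (fun k => w k ≠ 0)).Nonempty := by
    by_contra hcon
    apply hw
    funext k
    by_contra hk
    exact hcon ⟨k, Finset.mem_filter.mpr ⟨Finset.mem_univ _, hk⟩⟩
  set k : Fin (2*g+1) := (Finset.univ.filter (fun k => w k ≠ 0)).min' hSne with hkdef
  have hk_ne : w k ≠ 0 := by
    have := (Finset.univ.filter (fun k => w k ≠ 0)).min'_mem hSne
    exact (Finset.mem_filter.mp this).2
  have hk_min : ∀ j : Fin (2*g+1), j < k → w j = 0 := by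
    intro j hj
    by_contra hjn
    have hmem : j ∈ Finset.univ.filter (fun k => w k ≠ 0) := by
      simp only [Finset.mem_filter, Finset.mem_univ, true_and]
      exact hjn
    have := Finset.min'_le _ j hmem
    exact absurd hj (not_lt.mpr this)
  -- x vanishes below k
  have hxlt : ∀ N : ℕ, ∀ j : Fin (2*g+1), (j:ℕ) < N → j < k → x j = 0 := by
    intro N
    induction N with
    | zero => intro j h; omega
    | succ N ih =>
      intro j hjN hjk
      have hWj : W j = 0 := by
        show ((w j : ℝ)) = 0
        exact_mod_cast hk_min j hjk
      have hsum : W j = ∑ i, n j i * x i := by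
        rw [← hnx]; rfl
      have : ∑ i, n j i * x i = x j := by
        rw [Finset.sum_eq_single j]
        · rw [hn_diag j, one_mul]
        · intro b _ hbj
          rcases lt_or_gt_of_ne hbj with hb | hb
          · have hbN : (b:ℕ) < N := by
              have := Fin.lt_iff_val_lt_val.mp hb
              omega
            rw [ih b hbN (lt_trans hb hjk), mul_zero]
          · rw [hn_lower j b hb, zero_mul]
        · intro h; exact absurd (Finset.mem_univ j) h
      rw [hsum, this] at hWj
      exact hWj
  have hxk : x k = W k := by
    have hsum : W k = ∑ i, n k i * x i := by
      rw [← hnx]; rfl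
    have : ∑ i, n k i * x i = x k := by
      rw [Finset.sum_eq_single k]
      · rw [hn_diag k, one_mul]
      · intro b _ hbk
        rcases lt_or_gt_of_ne hbk with hb | hb
        · rw [hxlt ((b:ℕ)+1) b (Nat.lt_succ_self _) hb, mul_zero]
        · rw [hn_lower k b hb, zero_mul]
      · intro h; exact absurd (Finset.mem_univ k) h
    rw [hsum, this]
  -- |u k| ≤ sqrt (H W W)
  have hHWW : H W W = ∑ i, u i * u i := by
    rw [hH W W]; rfl
  have hle_sum : u k * u k ≤ ∑ i, u i * u i := by
    apply Finset.single_le_sum (fun i _ => mul_self_nonneg (u i)) (Finset.mem_univ k)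
  have habs : |u k| ≤ Real.sqrt (H W W) := by
    rw [← Real.sqrt_mul_self_eq_abs, hHWW]
    exact Real.sqrt_le_sqrt hle_sum
  have hshort' : |u k| < c^g * ε := lt_of_le_of_lt habs hshort
  -- |w k| ≥ 1
  have hwk1 : (1:ℝ) ≤ |W k| := by
    rw [hW]
    have : (1:ℤ) ≤ |w k| := Int.one_le_abs hk_ne
    calc (1:ℝ) = ((1:ℤ):ℝ) := by norm_num
      _ ≤ ((|w k| : ℤ) : ℝ) := by exact_mod_cast this
      _ = |((w k : ℤ) : ℝ)| := by push_cast; ring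
  have hdk := hdpos k
  have huk_abs : |u k| = (d k)⁻¹ * |W k| := by
    rw [hu_eq k, hxk, abs_mul, abs_of_pos (inv_pos.mpr hdk)]
  have hkey : (d k)⁻¹ < c^g * ε := by
    have : (d k)⁻¹ ≤ |u k| := by
      rw [huk_abs]
      nlinarith [inv_pos.mpr hdk]
    linarith
  -- hence 1 < c^g * ε * d k
  have hbig : 1 < c^g * ε * d k := by
    have h := mul_lt_mul_of_pos_right hkey hdk
    rwa [inv_mul_cancel₀ (ne_of_gt hdk)] at h
  -- case analysis on the position of k
  rcases lt_trichotomy (k:ℕ) g with hklt | hkeq | hkgt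
  · -- k < g : contradiction
    exfalso
    have hdk_eq : d k = (t ((k:ℕ)+1))⁻¹ := by rw [hd k, if_pos hklt]
    have hT : c^g < t ((k:ℕ)+1) := by
      have h1 := cpow_lt_t ((k:ℕ)+1) (by omega) (by omega)
      have h2 : c^g ≤ c^(g+1-((k:ℕ)+1)) := by
        apply pow_le_pow_of_le_one (le_of_lt hc0) (le_of_lt hc1)
        omega
      linarith
    have hTpos : 0 < t ((k:ℕ)+1) := ht_pos _ (by omega) (by omega)
    rw [hdk_eq] at hbig
    have h2 : t ((k:ℕ)+1) * 1 < t ((k:ℕ)+1) * (c^g * ε * (t ((k:ℕ)+1))⁻¹) :=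
      mul_lt_mul_of_pos_left hbig hTpos
    rw [mul_one] at h2
    have h3 : t ((k:ℕ)+1) * (c^g * ε * (t ((k:ℕ)+1))⁻¹) = c^g * ε := by
      field_simp
    rw [h3] at h2
    nlinarith
  · -- k = g : contradiction
    exfalso
    have hdk_eq : d k = 1 := by
      rw [hd k, if_neg (by omega), if_pos hkeq]
    rw [hdk_eq, mul_one] at hbig
    nlinarith [(pow_le_one₀ (le_of_lt hc0) (le_of_lt hc1) : c^g ≤ 1)]
  · -- k > g : conclude
    obtain ⟨i, hi1, hig, hdk_eq⟩ : ∃ i, 1 ≤ i ∧ i ≤ g ∧ d k = t i := by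
      have hkub : (k:ℕ) < 2*g+1 := k.isLt
      refine ⟨2*g+1 - (k:ℕ), by omega, by omega, ?_⟩
      rw [hd k, if_neg (by omega), if_neg (by omega)]
    have hTpos : 0 < t i := ht_pos _ hi1 hig
    have h2 : c^(i-1) * t i ≤ t 1 := t_le i hi1 hig
    have h3 : c^(g-1) ≤ c^(i-1) :=
      pow_le_pow_of_le_one (le_of_lt hc0) (le_of_lt hc1) (by omega)
    have hgpow : c^g = c^(g-1) * c := by
      rw [← pow_succ]
      congr 1
      omega
    rw [hdk_eq] at hbig
    have hp : (0:ℝ) < c^(i-1) := pow_pos hc0 _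
    have step1 : 1 < c^(i-1) * (c * ε * t i) := by
      have hmul := mul_le_mul_of_nonneg_right h3
        (show (0:ℝ) ≤ c * ε * t i by positivity)
      calc (1:ℝ) < c^g * ε * t i := hbig
        _ = c^(g-1) * (c * ε * t i) := by rw [hgpow]; ring
        _ ≤ c^(i-1) * (c * ε * t i) := hmul
    have step2 : c^(i-1) * (c * ε * t i) ≤ c^(i-1) * (ε * t i) := by
      apply mul_le_mul_of_nonneg_left _ (le_of_lt hp)
      nlinarith
    have step3 : c^(i-1) * (ε * t i) ≤ ε * t 1 := by
      have := mul_le_mul_of_nonneg_left h2 (le_of_lt hε0)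
      calc c^(i-1) * (ε * t i) = ε * (c^(i-1) * t i) := by ring
        _ ≤ ε * t 1 := this
    have hfin : 1 < ε * t 1 := lt_of_lt_of_le step1 (le_trans step2 step3)
    rw [gt_iff_lt, div_lt_iff₀ hε0]
    linarith
end

section
/- Let g ≥ 1 and let f ∈ ℚ[x] be monic of degree 2g+1 and squarefree, with complex roots ω₁,…,ω_{2g+1}. Let U ∈ ℚ[x] be coprime to f, of degree m, and let A = ℚ[x]/(f) with B(v,w) = (−1)^m·τ(v·w·U^{−1}), where τ : A → ℚ sends a class to the coefficient of x^{2g} in its representative of degree ≤ 2g and U^{−1} is the inverse of the class of U in A. Let T : A⊗_ℚℝ → A⊗_ℚℝ be multiplication by x, and let H be any inner product on A⊗_ℚℝ that is compatible with the ℝ-bilinear extension of B and such that T commutes with its H-adjoint. Then H(U, U) = Σ_{i=1}^{2g+1} |U(ω_i)| / |f′(ω_i)|, where U denotes the class of U in A ⊆ A⊗_ℚℝ. -/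
open Polynomial

/-- An inner product: a symmetric positive-definite bilinear form. -/
def IsInnerProduct {V : Type*} [AddCommGroup V] [Module ℝ V]
    (H : LinearMap.BilinForm ℝ V) : Prop :=
  (∀ v w : V, H v w = H w v) ∧ ∀ v : V, v ≠ 0 → 0 < H v v

/-- `H` is compatible with the bilinear form `B`: the endomorphism `S` determined by
`B v w = H (S v) w` is an `H`-isometry. -/
def CompatibleWith {V : Type*} [AddCommGroup V] [Module ℝ V]
    (B : V → V → ℝ) (H : LinearMap.BilinForm ℝ V) : Prop :=
  ∃ S : V →ₗ[ℝ] V, (∀ v w : V, B v w = H (S v) w) ∧ ∀ v w : V, H (S v) (S w) = H v w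

/-- `T` commutes with its `H`-adjoint. -/
def CommutesWithAdjoint {V : Type*} [AddCommGroup V] [Module ℝ V]
    (H : LinearMap.BilinForm ℝ V) (T : V →ₗ[ℝ] V) : Prop :=
  ∃ T' : V →ₗ[ℝ] V, (∀ v w : V, H (T v) w = H v (T' w)) ∧ T ∘ₗ T' = T' ∘ₗ T

section Aux

lemma lag_coeff {ι : Type*} [DecidableEq ι] {s : Finset ι} {v : ι → ℂ}
    (hvs : Set.InjOn v s) {q : ℂ[X]} (hq : q.degree < s.card) :
    q.coeff (s.card - 1) = ∑ i ∈ s, q.eval (v i) / ∏ j ∈ s.erase i, (v i - v j) := by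
  have hbd : ∀ x y : ℂ, (Lagrange.basisDivisor x y).leadingCoeff = (x - y)⁻¹ := by
    intro x y
    rcases eq_or_ne x y with rfl | hxy
    · simp [Lagrange.basisDivisor_self]
    · rw [Lagrange.basisDivisor, leadingCoeff_mul, leadingCoeff_X_sub_C, leadingCoeff_C, mul_one]
  have hlc : ∀ i ∈ s, (Lagrange.basis s v i).coeff (s.card - 1)
      = (∏ j ∈ s.erase i, (v i - v j))⁻¹ := by
    intro i hi
    have hnd := Lagrange.natDegree_basis hvs hi
    have : (Lagrange.basis s v i).coeff (s.card - 1) = (Lagrange.basis s v i).leadingCoeff := by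
      rw [leadingCoeff, hnd]
    rw [this, Lagrange.basis, leadingCoeff_prod]
    rw [← Finset.prod_inv_distrib]
    exact Finset.prod_congr rfl fun j _ => hbd _ _
  have hq' := Lagrange.eq_interpolate hvs hq
  conv_lhs => rw [hq']
  rw [Lagrange.interpolate_apply, finset_sum_coeff]
  refine Finset.sum_congr rfl fun i hi => ?_
  rw [coeff_C_mul, hlc i hi, div_eq_mul_inv]

lemma real_lift {q : ℂ[X]} (h : ∀ k, (starRingEnd ℂ) (q.coeff k) = q.coeff k) :
    ∃ r : ℝ[X], r.map (algebraMap ℝ ℂ) = q := by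
  have : q ∈ lifts ((algebraMap ℝ ℂ) : ℝ →+* ℂ) := by
    rw [lifts_iff_coeff_lifts]
    intro k
    exact ⟨(q.coeff k).re, by
      have := Complex.conj_eq_iff_re.mp (h k)
      simpa [Complex.coe_algebraMap] using this⟩
  exact (mem_lifts _).mp this

lemma adj_ind {A : Type*} [CommRing A] [Algebra ℝ A]
    (H : LinearMap.BilinForm ℝ A) (x c : A)
    (h : ∀ v w, H (x * v) w = H v (c * w)) :
    ∀ (p : ℝ[X]) (v w : A), H ((aeval x p) * v) w = H v ((aeval c p) * w) := by
  intro p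
  induction p using Polynomial.induction_on' with
  | add p q hp hq =>
      intro v w
      simp only [map_add, add_mul, LinearMap.add_apply, map_add, hp v w, hq v w]
  | monomial k a =>
      induction k with
      | zero =>
          intro v w
          simp only [aeval_monomial, pow_zero, mul_one]
          rw [← Algebra.smul_def, ← Algebra.smul_def, map_smul, map_smul]
          rfl
      | succ k ih =>
          intro v w
          have e1 : (aeval x) (monomial (k+1) a) * v = x * ((aeval x) (monomial k a) * v) := by
            simp [aeval_monomial, pow_succ]; ring
          calc H ((aeval x) (monomial (k+1) a) * v) w
              = H (x * ((aeval x) (monomial k a) * v)) w := by rw [e1]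
            _ = H ((aeval x) (monomial k a) * v) (c * w) := h _ _
            _ = H v ((aeval c) (monomial k a) * (c * w)) := ih v (c * w)
            _ = H v ((aeval c) (monomial (k+1) a) * w) := by
                  congr 1
                  simp [aeval_monomial, pow_succ]; ring

lemma twist_struct {A : Type*} [CommRing A] [Algebra ℝ A] (S : A →ₗ[ℝ] A) (x c : A)
    (h : ∀ v, S (x * v) = c * S v) :
    ∀ (p : ℝ[X]) (v : A), S ((aeval x p) * v) = (aeval c p) * S v := by
  intro p
  induction p using Polynomial.induction_on' with
  | add p q hp hq =>
      intro v
      simp only [map_add, add_mul, map_add, hp v, hq v]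
  | monomial k a =>
      induction k with
      | zero =>
          intro v
          simp only [aeval_monomial, pow_zero, mul_one]
          rw [← Algebra.smul_def, ← Algebra.smul_def, map_smul]
      | succ k ih =>
          intro v
          have e1 : (aeval x) (monomial (k+1) a) * v = x * ((aeval x) (monomial k a) * v) := by
            simp [aeval_monomial, pow_succ]; ring
          rw [e1, h, ih]
          simp [aeval_monomial, pow_succ]; ring

end Aux

open Finset in
theorem core_thm (g m : ℕ) (fR : ℝ[X]) (hfRmonic : fR.Monic)
    (hfRdeg : fR.natDegree = 2*g+1)
    (ω : Fin (2*g+1) → ℂ)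
    (hfC : fR.map (algebraMap ℝ ℂ) = ∏ i : Fin (2*g+1), (X - C (ω i)))
    (hωinj : Function.Injective ω)
    (uR : ℝ[X])
    (τ : AdjoinRoot fR → ℝ)
    (hτ : ∀ p : ℝ[X], p.natDegree ≤ 2*g → τ (AdjoinRoot.mk fR p) = p.coeff (2*g))
    (Uinv : AdjoinRoot fR)
    (hUinv : AdjoinRoot.mk fR uR * Uinv = 1)
    (H : LinearMap.BilinForm ℝ (AdjoinRoot fR))
    (hHsym : ∀ v w, H v w = H w v)
    (hHpos : ∀ v, v ≠ 0 → 0 < H v v)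
    (S : AdjoinRoot fR →ₗ[ℝ] AdjoinRoot fR)
    (hS1 : ∀ v w, ((-1:ℝ))^m * τ (v * w * Uinv) = H (S v) w)
    (hS2 : ∀ v w, H (S v) (S w) = H v w)
    (T' : AdjoinRoot fR →ₗ[ℝ] AdjoinRoot fR)
    (hT'adj : ∀ v w, H (AdjoinRoot.root fR * v) w = H v (T' w))
    (hT'comm : ∀ v, AdjoinRoot.root fR * (T' v) = T' (AdjoinRoot.root fR * v)) :
    H (AdjoinRoot.mk fR uR) (AdjoinRoot.mk fR uR) =
      ∑ i : Fin (2*g+1),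
        ‖(uR.map (algebraMap ℝ ℂ)).eval (ω i)‖ /
          ‖∏ j ∈ Finset.univ.erase i, (ω i - ω j)‖ := by
  classical
  have heval : ∀ x : ℂ, aeval x fR = ∏ j : Fin (2*g+1), (x - ω j) := by
    intro x
    rw [aeval_def, ← eval_map, hfC, eval_prod]
    exact Finset.prod_congr rfl fun j _ => by simp
  have hfz : ∀ i, aeval (ω i) fR = 0 := by
    intro i
    rw [heval]
    exact Finset.prod_eq_zero (Finset.mem_univ i) (by simp)
  -- evaluation maps
  let φ : Fin (2*g+1) → (AdjoinRoot fR →ₐ[ℝ] ℂ) := fun i => AdjoinRoot.liftAlgHom fR (Algebra.ofId ℝ ℂ) (ω i) (hfz i)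
  have hφmk : ∀ i (p : ℝ[X]), φ i (AdjoinRoot.mk fR p) = aeval (ω i) p := by
    intro i p
    show AdjoinRoot.liftAlgHom fR (Algebra.ofId ℝ ℂ) (ω i) (hfz i) (AdjoinRoot.mk fR p) = _
    rfl
  have hφroot : ∀ i, φ i (AdjoinRoot.root fR) = ω i :=
    fun i => AdjoinRoot.liftAlgHom_root fR (Algebra.ofId ℝ ℂ) (ω i) (hfz i)
  set e : Fin (2*g+1) → ℂ := fun i => ∏ j ∈ Finset.univ.erase i, (ω i - ω j) with hedef
  have he_ne : ∀ i, e i ≠ 0 := by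
    intro i
    refine Finset.prod_ne_zero_iff.mpr fun j hj => ?_
    have : j ≠ i := Finset.ne_of_mem_erase hj
    exact sub_ne_zero.mpr fun h => this (hωinj h.symm)
  have hτsum : ∀ p : ℝ[X], ((τ (AdjoinRoot.mk fR p) : ℝ) : ℂ)
      = ∑ i : Fin (2*g+1), aeval (ω i) p / e i := by
    intro p
    set p' := p %ₘ fR with hp'def
    have hdvd : fR ∣ p - p' := by
      refine ⟨p /ₘ fR, ?_⟩
      rw [hp'def, modByMonic_eq_sub_mul_div p fR]
      ring
    have hmkeq : AdjoinRoot.mk fR p = AdjoinRoot.mk fR p' := AdjoinRoot.mk_eq_mk.mpr hdvd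
    have hdeglt : p'.degree < fR.degree := degree_modByMonic_lt p hfRmonic
    have hfRdegree : fR.degree = ((2*g+1 : ℕ) : WithBot ℕ) := by
      rw [degree_eq_natDegree hfRmonic.ne_zero, hfRdeg]
    have hnd : p'.natDegree ≤ 2*g := by
      rcases eq_or_ne p' 0 with h0 | h0
      · simp [h0]
      · have := (natDegree_lt_iff_degree_lt h0).mpr (hfRdegree ▸ hdeglt)
        omega
    have hτval : τ (AdjoinRoot.mk fR p) = p'.coeff (2*g) := by
      rw [hmkeq]; exact hτ p' hnd
    have hevp : ∀ i, aeval (ω i) p = aeval (ω i) p' := by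
      intro i
      obtain ⟨q, hq⟩ := hdvd
      have : p = p' + fR * q := by linear_combination hq
      rw [this]
      simp [map_add, map_mul, hfz i]
    have hcard : (Finset.univ : Finset (Fin (2*g+1))).card = 2*g+1 := by simp
    have hinjOn : Set.InjOn ω (Finset.univ : Finset (Fin (2*g+1))) :=
      fun a _ b _ hab => hωinj hab
    have hqdeg : (p'.map (algebraMap ℝ ℂ)).degree
        < ((Finset.univ : Finset (Fin (2*g+1))).card : ℕ) := by
      rw [hcard]
      calc (p'.map (algebraMap ℝ ℂ)).degree ≤ p'.degree := degree_map_le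
        _ < fR.degree := hdeglt
        _ = ((2*g+1 : ℕ) : WithBot ℕ) := hfRdegree
    have hco := lag_coeff hinjOn hqdeg
    rw [hcard] at hco
    have h1 : (p'.map (algebraMap ℝ ℂ)).coeff (2*g+1-1) = ((p'.coeff (2*g) : ℝ) : ℂ) := by
      rw [coeff_map]
      norm_num
    rw [hτval, ← h1, hco]
    refine Finset.sum_congr rfl fun i _ => ?_
    rw [hevp i, aeval_def, eval_map]
  have hτsum' : ∀ z : AdjoinRoot fR, ((τ z : ℝ) : ℂ) = ∑ i : Fin (2*g+1), φ i z / e i := by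
    intro z
    obtain ⟨p, rfl⟩ := AdjoinRoot.mk_surjective (g := fR) z
    rw [hτsum p]
    exact Finset.sum_congr rfl fun i _ => by rw [hφmk]
  -- cancellation
  have hH0 : ∀ x : AdjoinRoot fR, (∀ w, H x w = 0) → x = 0 := by
    intro x hx
    by_contra hne
    exact absurd (hx x) (ne_of_gt (hHpos x hne))
  have hHcancel : ∀ x y : AdjoinRoot fR, (∀ w, H x w = H y w) → x = y := by
    intro x y hxy
    have h0 : x - y = 0 := hH0 _ fun w => by
      rw [map_sub, LinearMap.sub_apply, hxy w, sub_self]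
    exact sub_eq_zero.mp h0
  -- adjoint structure
  set c : AdjoinRoot fR := T' 1 with hcdef
  have hT'mul : ∀ v, T' v = c * v := by
    intro v
    obtain ⟨p, rfl⟩ := AdjoinRoot.mk_surjective (g := fR) v
    have := twist_struct T' (AdjoinRoot.root fR) (AdjoinRoot.root fR) (fun v => (hT'comm v).symm) p 1
    rw [mul_one, AdjoinRoot.aeval_eq] at this
    rw [this, mul_comm]
  have hadj : ∀ v w, H (AdjoinRoot.root fR * v) w = H v (c * w) := by
    intro v w
    rw [hT'adj v w, hT'mul w]
  have hpoly := adj_ind H (AdjoinRoot.root fR) c hadj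
  have hfc : aeval c fR = 0 := by
    have h0 : ∀ v w, H v ((aeval c fR) * w) = 0 := by
      intro v w
      rw [← hpoly fR v w, AdjoinRoot.aeval_eq, AdjoinRoot.mk_self, zero_mul, map_zero]
      rfl
    refine hH0 _ fun w => ?_
    have := h0 w 1
    rw [mul_one] at this
    rw [hHsym]
    exact this
  set σ : AdjoinRoot fR →ₐ[ℝ] AdjoinRoot fR := AdjoinRoot.liftAlgHom fR (Algebra.ofId ℝ (AdjoinRoot fR)) c hfc with hσdef
  have hσroot : σ (AdjoinRoot.root fR) = c := AdjoinRoot.liftAlgHom_root fR (Algebra.ofId ℝ (AdjoinRoot fR)) c hfc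
  have hσmk : ∀ p : ℝ[X], σ (AdjoinRoot.mk fR p) = aeval c p := by
    intro p
    rw [← AdjoinRoot.aeval_eq, ← hσroot, ← aeval_algHom_apply]
  have hσadj : ∀ a v w, H (a * v) w = H v (σ a * w) := by
    intro a v w
    obtain ⟨p, rfl⟩ := AdjoinRoot.mk_surjective (g := fR) a
    rw [hσmk, ← AdjoinRoot.aeval_eq]
    exact hpoly p v w
  have hσadj' : ∀ a v w, H v (a * w) = H (σ a * v) w := by
    intro a v w
    rw [hHsym v (a * w), hσadj a w v, hHsym w (σ a * v)]
  -- structure of S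
  have hSsa : ∀ v w, H (S v) w = H v (S w) := by
    intro v w
    rw [← hS1 v w, mul_comm v w, hS1 w v, hHsym]
  have hSS : ∀ v, S (S v) = v := by
    intro v
    refine hHcancel _ _ fun w => ?_
    rw [hSsa (S v) w, hS2 v w]
  have hSroot : ∀ v, S (AdjoinRoot.root fR * v) = c * S v := by
    intro v
    refine hHcancel _ _ fun w => ?_
    rw [← hS1 (AdjoinRoot.root fR * v) w,
      show AdjoinRoot.root fR * v * w * Uinv = v * (AdjoinRoot.root fR * w) * Uinv by ring,
      hS1 v (AdjoinRoot.root fR * w), hσadj' (AdjoinRoot.root fR) (S v) w, hσroot]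
  have hSa : ∀ a, S a = σ a * S 1 := by
    intro a
    obtain ⟨p, rfl⟩ := AdjoinRoot.mk_surjective (g := fR) a
    have := twist_struct S (AdjoinRoot.root fR) c hSroot p 1
    rw [mul_one, AdjoinRoot.aeval_eq] at this
    rw [this, hσmk]
  set s : AdjoinRoot fR := S 1 with hsdef
  have hs1 : σ s * s = 1 := by
    have h1 := hSS 1
    rw [show S (S 1) = S s from rfl, hSa s] at h1
    exact h1
  have hmaster : ∀ a b, H a b = ((-1:ℝ))^m * τ (σ a * s * b * Uinv) := by
    intro a b
    rw [show H a b = H (S (S a)) b by rw [hSS], ← hS1 (S a) b, hSa a]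
  -- roots machinery
  have hrootω : ∀ x : ℂ, aeval x fR = 0 → ∃ j, x = ω j := by
    intro x hx
    rw [heval] at hx
    obtain ⟨j, _, hj⟩ := Finset.prod_eq_zero_iff.mp hx
    exact ⟨j, sub_eq_zero.mp hj⟩
  have hπex : ∀ i, ∃ j, φ i c = ω j := by
    intro i
    apply hrootω
    rw [aeval_algHom_apply, hfc, map_zero]
  choose π hπ using hπex
  have hφσ : ∀ i a, φ i (σ a) = φ (π i) a := by
    intro i a
    have hcomp : (φ i).comp σ = φ (π i) := by
      apply AdjoinRoot.algHom_ext
      rw [AlgHom.comp_apply, hσroot, hπ i, hφroot]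
    exact AlgHom.congr_fun hcomp a
  -- conjugation on roots
  have hcjex : ∀ i, ∃ j, (starRingEnd ℂ) (ω i) = ω j := by
    intro i
    apply hrootω
    have h1 : aeval ((Complex.conjAe : ℂ ≃ₐ[ℝ] ℂ) (ω i)) fR
        = (Complex.conjAe : ℂ ≃ₐ[ℝ] ℂ) (aeval (ω i) fR) := aeval_algHom_apply _ _ _
    rw [hfz i, map_zero] at h1
    simpa using h1
  choose cj hcj using hcjex
  have hφcj : ∀ i a, φ (cj i) a = (starRingEnd ℂ) (φ i a) := by
    intro i a
    have hcomp : φ (cj i) = (Complex.conjAe : ℂ ≃ₐ[ℝ] ℂ).toAlgHom.comp (φ i) := by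
      apply AdjoinRoot.algHom_ext
      rw [hφroot, AlgHom.comp_apply, hφroot]
      simpa using (hcj i).symm
    rw [hcomp]
    simp
  have hcj2 : ∀ i, cj (cj i) = i := by
    intro i
    apply hωinj
    rw [← hcj (cj i), ← hcj i, Complex.conj_conj]
  have hπcj : ∀ i, π (cj i) = cj (π i) := by
    intro i
    apply hωinj
    calc ω (π (cj i)) = φ (cj i) c := (hπ (cj i)).symm
      _ = (starRingEnd ℂ) (φ i c) := hφcj i c
      _ = (starRingEnd ℂ) (ω (π i)) := by rw [hπ i]
      _ = ω (cj (π i)) := hcj (π i)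
  have hecj : ∀ i, e (cj i) = (starRingEnd ℂ) (e i) := by
    intro i
    have h1 : (starRingEnd ℂ) (e i) = ∏ j ∈ Finset.univ.erase i,
        (ω (cj i) - ω (cj j)) := by
      rw [hedef]
      rw [map_prod]
      exact Finset.prod_congr rfl fun j _ => by rw [map_sub, hcj i, hcj j]
    rw [h1, hedef]
    refine (Finset.prod_nbij' (fun j => cj j) (fun j => cj j) ?_ ?_ ?_ ?_ ?_).symm
    · intro a ha
      rcases Finset.mem_erase.mp ha with ⟨ha1, _⟩
      refine Finset.mem_erase.mpr ⟨?_, Finset.mem_univ _⟩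
      intro h
      have h' : cj a = cj i := h
      apply ha1
      have h2 := congrArg cj h'
      rwa [hcj2, hcj2] at h2
    · intro a ha
      rcases Finset.mem_erase.mp ha with ⟨ha1, _⟩
      refine Finset.mem_erase.mpr ⟨?_, Finset.mem_univ _⟩
      intro h
      have h' : cj a = i := h
      apply ha1
      rw [← h', hcj2]
    · intro a _; exact hcj2 a
    · intro a _; exact hcj2 a
    · intro a _; rfl
  set d : Fin (2*g+1) → ℂ := fun i => ((-1:ℂ))^m * φ i s * φ i Uinv / e i with hddef
  have hdcj : ∀ i, d (cj i) = (starRingEnd ℂ) (d i) := by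
    intro i
    rw [hddef]
    simp only [map_div₀, map_mul, map_pow, map_neg, map_one]
    rw [hφcj i s, hφcj i Uinv, hecj i]
  have hHcoord : ∀ a b, ((H a b : ℝ) : ℂ)
      = ∑ i : Fin (2*g+1), d i * φ (π i) a * φ i b := by
    intro a b
    rw [hmaster a b]
    push_cast
    rw [hτsum', Finset.mul_sum]
    refine Finset.sum_congr rfl fun i _ => ?_
    rw [map_mul, map_mul, map_mul, hφσ i a, hddef]
    ring
  -- test elements
  have htest : ∀ (i₀ : Fin (2*g+1)) (t : ℂ), t ≠ 0 → ((cj i₀ = i₀) → (starRingEnd ℂ) t = t) →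
      ∃ a : AdjoinRoot fR, a ≠ 0 ∧
        ∀ k, φ k a = if k = i₀ then t else if k = cj i₀ then (starRingEnd ℂ) t else 0 := by
    intro i₀ t ht hreal
    set N : Fin (2*g+1) → ℂ[X] := fun i => ∏ j ∈ Finset.univ.erase i, (X - C (ω j)) with hNdef
    have hNself : ∀ i, (N i).eval (ω i) = e i := by
      intro i
      rw [hNdef, eval_prod, hedef]
      exact Finset.prod_congr rfl fun j _ => by simp
    have hNne : ∀ i k, k ≠ i → (N i).eval (ω k) = 0 := by
      intro i k hk
      rw [hNdef, eval_prod]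
      refine Finset.prod_eq_zero (Finset.mem_erase.mpr ⟨hk, Finset.mem_univ _⟩) (by simp)
    have hNconj : ∀ i, (N i).map (starRingEnd ℂ) = N (cj i) := by
      intro i
      rw [hNdef, Polynomial.map_prod]
      have h1 : ∀ j, ((X : ℂ[X]) - C (ω j)).map (starRingEnd ℂ) = X - C (ω (cj j)) := by
        intro j
        rw [Polynomial.map_sub, Polynomial.map_X, Polynomial.map_C, hcj j]
      rw [show (∏ j ∈ Finset.univ.erase i, ((X : ℂ[X]) - C (ω j)).map (starRingEnd ℂ))
          = ∏ j ∈ Finset.univ.erase i, ((X : ℂ[X]) - C (ω (cj j))) from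
        Finset.prod_congr rfl fun j _ => h1 j]
      refine Finset.prod_nbij' (fun j => cj j) (fun j => cj j) ?_ ?_ ?_ ?_ ?_
      · intro a ha
        rcases Finset.mem_erase.mp ha with ⟨ha1, _⟩
        refine Finset.mem_erase.mpr ⟨?_, Finset.mem_univ _⟩
        intro h
        have h' : cj a = cj i := h
        apply ha1
        have h2 := congrArg cj h'
        rwa [hcj2, hcj2] at h2
      · intro a ha
        rcases Finset.mem_erase.mp ha with ⟨ha1, _⟩
        refine Finset.mem_erase.mpr ⟨?_, Finset.mem_univ _⟩
        intro h
        have h' : cj a = i := h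
        apply ha1
        rw [← h', hcj2]
      · intro a _; exact hcj2 a
      · intro a _; exact hcj2 a
      · intro a _; rfl
    set Q : ℂ[X] := C (t / e i₀) * N i₀ +
        (if cj i₀ = i₀ then 0 else C ((starRingEnd ℂ) t / e (cj i₀)) * N (cj i₀)) with hQdef
    have hQconj : Q.map (starRingEnd ℂ) = Q := by
      by_cases hfix : cj i₀ = i₀
      · rw [hQdef, if_pos hfix, add_zero, Polynomial.map_mul, Polynomial.map_C, hNconj, hfix]
        congr 2
        rw [map_div₀, hreal hfix, ← hecj i₀, hfix]
      · have hct : (starRingEnd ℂ) (t / e i₀) = (starRingEnd ℂ) t / e (cj i₀) := by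
          rw [map_div₀, hecj i₀]
        have hct2 : (starRingEnd ℂ) ((starRingEnd ℂ) t / e (cj i₀)) = t / e i₀ := by
          rw [map_div₀, Complex.conj_conj,
            show (starRingEnd ℂ) (e (cj i₀)) = e i₀ by rw [hecj i₀, Complex.conj_conj]]
        rw [hQdef, if_neg hfix, Polynomial.map_add, Polynomial.map_mul, Polynomial.map_C,
          hNconj, Polynomial.map_mul, Polynomial.map_C, hNconj, hcj2, hct, hct2]
        ring
    have hQc : ∀ k, (starRingEnd ℂ) (Q.coeff k) = Q.coeff k := by
      intro k
      rw [← coeff_map, hQconj]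
    obtain ⟨r, hr⟩ := real_lift hQc
    have hvals : ∀ k, φ k (AdjoinRoot.mk fR r) = Q.eval (ω k) := by
      intro k
      rw [hφmk, aeval_def, eval₂_eq_eval_map, hr]
    have hvals' : ∀ k, φ k (AdjoinRoot.mk fR r)
        = if k = i₀ then t else if k = cj i₀ then (starRingEnd ℂ) t else 0 := by
      intro k
      rw [hvals k, hQdef]
      by_cases hk1 : k = i₀
      · subst hk1
        rw [if_pos rfl]
        by_cases hfix : cj k = k
        · rw [if_pos hfix, add_zero, eval_mul, eval_C, hNself, div_mul_cancel₀ _ (he_ne k)]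
        · rw [if_neg hfix, eval_add, eval_mul, eval_C, hNself, eval_mul, eval_C,
            hNne (cj k) k (fun h => hfix h.symm), mul_zero, add_zero,
            div_mul_cancel₀ _ (he_ne k)]
      · rw [if_neg hk1]
        by_cases hk2 : k = cj i₀
        · have hfix : ¬ (cj i₀ = i₀) := fun h => hk1 (by rw [hk2, h])
          rw [if_pos hk2, if_neg hfix, eval_add, eval_mul, eval_C, hNne i₀ k hk1, mul_zero,
            zero_add, eval_mul, eval_C, hk2, hNself, div_mul_cancel₀ _ (he_ne (cj i₀))]
        · rw [if_neg hk2]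
          by_cases hfix : cj i₀ = i₀
          · rw [if_pos hfix, add_zero, eval_mul, eval_C, hNne i₀ k hk1, mul_zero]
          · rw [if_neg hfix, eval_add, eval_mul, eval_C, hNne i₀ k hk1, mul_zero, eval_mul,
              eval_C, hNne (cj i₀) k hk2, mul_zero, add_zero]
    refine ⟨AdjoinRoot.mk fR r, ?_, hvals'⟩
    intro h0
    apply ht
    have := hvals' i₀
    rw [h0, map_zero, if_pos rfl] at this
    exact this.symm
  -- nonvanishing of d
  have hφs_ne : ∀ i, φ i s ≠ 0 := by
    intro i
    have h1 : φ i (σ s) * φ i s = 1 := by rw [← map_mul, hs1, map_one]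
    exact right_ne_zero_of_mul_eq_one h1
  have hφU : ∀ i, φ i (AdjoinRoot.mk fR uR) * φ i Uinv = 1 := by
    intro i
    rw [← map_mul, hUinv, map_one]
  have hφUinv_ne : ∀ i, φ i Uinv ≠ 0 := fun i => right_ne_zero_of_mul_eq_one (hφU i)
  have hd_ne : ∀ i, d i ≠ 0 := by
    intro i
    rw [hddef]
    exact div_ne_zero (mul_ne_zero (mul_ne_zero (pow_ne_zero _ (by norm_num)) (hφs_ne i))
      (hφUinv_ne i)) (he_ne i)
  -- π = cj
  have hπeq : ∀ i₀, π i₀ = cj i₀ := by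
    intro i₀
    by_contra hne
    by_cases hfix : π i₀ = i₀
    · have hne2 : i₀ ≠ cj i₀ := fun h => hne (by rw [hfix, ← h])
      obtain ⟨t, ht2⟩ : ∃ t : ℂ, t^2 = -(d i₀)⁻¹ := by
        obtain ⟨z, hz⟩ := Complex.exists_root
          (f := (X:ℂ[X])^2 - C (-(d i₀)⁻¹)) (by rw [degree_X_pow_sub_C (by norm_num)]; norm_num)
        refine ⟨z, ?_⟩
        have := hz
        simp only [Polynomial.IsRoot, eval_sub, eval_pow, eval_X, eval_C, sub_eq_zero] at this
        exact this
      have htne : t ≠ 0 := by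
        intro h
        rw [h] at ht2
        have : (d i₀)⁻¹ = 0 := by
          have := ht2.symm
          simpa [neg_eq_zero] using this
        exact hd_ne i₀ (inv_eq_zero.mp this)
      obtain ⟨a, hane, ha⟩ := htest i₀ t htne (fun h => absurd h.symm hne2)
      have hHaa := hHcoord a a
      have hsum : ∑ i : Fin (2*g+1), d i * φ (π i) a * φ i a = -2 := by
        rw [← Finset.sum_subset (Finset.subset_univ ({i₀, cj i₀} : Finset (Fin (2*g+1))))]
        · rw [Finset.sum_pair hne2]
          have h1 : φ i₀ a = t := by rw [ha i₀]; simp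
          have h2 : φ (cj i₀) a = (starRingEnd ℂ) t := by
            rw [ha, if_neg (fun h => hne2 h.symm), if_pos rfl]
          have hterm1 : d i₀ * φ (π i₀) a * φ i₀ a = -1 := by
            rw [hfix, h1, mul_assoc, ← sq, ht2, mul_neg, mul_inv_cancel₀ (hd_ne i₀)]
          have hterm2 : d (cj i₀) * φ (π (cj i₀)) a * φ (cj i₀) a = -1 := by
            rw [hπcj i₀, hfix, h2, hdcj i₀]
            rw [show (starRingEnd ℂ) (d i₀) * (starRingEnd ℂ) t * (starRingEnd ℂ) t
                = (starRingEnd ℂ) (d i₀ * t * t) by rw [map_mul, map_mul]]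
            rw [show d i₀ * t * t = -1 by rw [mul_assoc, ← sq, ht2, mul_neg,
              mul_inv_cancel₀ (hd_ne i₀)]]
            simp
          rw [hterm1, hterm2]
          norm_num
        · intro x _ hx
          have hx1 : x ≠ i₀ := fun h => hx (by simp [h])
          have hx2 : x ≠ cj i₀ := fun h => hx (by simp [h])
          rw [ha x, if_neg hx1, if_neg hx2, mul_zero]
      rw [hsum] at hHaa
      have hval : H a a = -2 := by exact_mod_cast hHaa
      linarith [hHpos a hane]
    · obtain ⟨a, hane, ha⟩ := htest i₀ 1 one_ne_zero (fun _ => by simp)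
      have hHaa := hHcoord a a
      have hsum : ∑ i : Fin (2*g+1), d i * φ (π i) a * φ i a = 0 := by
        refine Finset.sum_eq_zero fun i _ => ?_
        by_cases h1 : i = i₀
        · subst h1
          rw [ha (π i), if_neg hfix, if_neg hne, mul_zero, zero_mul]
        · by_cases h2 : i = cj i₀
          · subst h2
            have hb1 : cj (π i₀) ≠ i₀ := by
              intro h
              apply hne
              rw [← hcj2 (π i₀), h]
            have hb2 : cj (π i₀) ≠ cj i₀ := by
              intro h
              apply hfix
              have := congrArg cj h
              rwa [hcj2, hcj2] at this
            rw [hπcj i₀, ha (cj (π i₀)), if_neg hb1, if_neg hb2, mul_zero, zero_mul]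
          · rw [ha i, if_neg h1, if_neg h2, mul_zero]
      rw [hsum] at hHaa
      have hval : H a a = 0 := by exact_mod_cast hHaa
      have := hHpos a hane
      linarith
  -- Hermitian coordinates
  have hHc : ∀ a b, ((H a b : ℝ) : ℂ)
      = ∑ i : Fin (2*g+1), d i * (starRingEnd ℂ) (φ i a) * φ i b := by
    intro a b
    rw [hHcoord a b]
    exact Finset.sum_congr rfl fun i _ => by rw [hπeq i, hφcj i a]
  -- d is real
  have hdreal : ∀ i, (starRingEnd ℂ) (d i) = d i := by
    intro i
    by_cases hfix : cj i = i
    · have := hdcj i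
      rw [hfix] at this
      exact this.symm
    · have hne2 : i ≠ cj i := fun h => hfix h.symm
      obtain ⟨a, hane, ha⟩ := htest i 1 one_ne_zero (fun h => absurd h hfix)
      obtain ⟨b, hbne, hb⟩ := htest i Complex.I Complex.I_ne_zero (fun h => absurd h hfix)
      have h1 := hHc a b
      have h2 := hHc b a
      rw [hHsym a b] at h1
      have h3 : ∑ k : Fin (2*g+1), d k * (starRingEnd ℂ) (φ k a) * φ k b
          = ∑ k : Fin (2*g+1), d k * (starRingEnd ℂ) (φ k b) * φ k a := by
        rw [← h1, ← h2]
      have hcollapse : ∀ (x y : AdjoinRoot fR),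
          (∀ k, k ≠ i → k ≠ cj i → φ k x = 0) →
          ∑ k : Fin (2*g+1), d k * (starRingEnd ℂ) (φ k x) * φ k y
            = d i * (starRingEnd ℂ) (φ i x) * φ i y
              + d (cj i) * (starRingEnd ℂ) (φ (cj i) x) * φ (cj i) y := by
        intro x y hx
        rw [← Finset.sum_subset (Finset.subset_univ ({i, cj i} : Finset (Fin (2*g+1))))]
        · rw [Finset.sum_pair hne2]
        · intro k _ hk
          have hk1 : k ≠ i := fun h => hk (by simp [h])
          have hk2 : k ≠ cj i := fun h => hk (by simp [h])
          rw [hx k hk1 hk2, map_zero, mul_zero, zero_mul]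
      have hza : ∀ k, k ≠ i → k ≠ cj i → φ k a = 0 := by
        intro k hk1 hk2
        rw [ha k, if_neg hk1, if_neg hk2]
      have hzb : ∀ k, k ≠ i → k ≠ cj i → φ k b = 0 := by
        intro k hk1 hk2
        rw [hb k, if_neg hk1, if_neg hk2]
      rw [hcollapse a b hza, hcollapse b a hzb] at h3
      have hai : φ i a = 1 := by rw [ha i]; simp
      have haci : φ (cj i) a = 1 := by
        rw [ha, if_neg (fun h => hne2 h.symm), if_pos rfl, map_one]
      have hbi : φ i b = Complex.I := by rw [hb i]; simp
      have hbci : φ (cj i) b = -Complex.I := by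
        rw [hb, if_neg (fun h => hne2 h.symm), if_pos rfl, Complex.conj_I]
      rw [hai, haci, hbi, hbci, hdcj i] at h3
      simp only [map_one, map_neg, Complex.conj_I, mul_one, one_mul] at h3
      have hfactor : (d i - (starRingEnd ℂ) (d i)) * (2 * Complex.I) = 0 := by
        linear_combination h3
      rcases mul_eq_zero.mp hfactor with h | h
      · exact (sub_eq_zero.mp h).symm
      · exact absurd h (by simp [Complex.I_ne_zero])
  -- |φ i s| = 1
  have habs_s : ∀ i, ‖φ i s‖ = 1 := by
    intro i
    have h1 : (starRingEnd ℂ) (φ i s) * φ i s = 1 := by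
      have h2 : φ i (σ s) * φ i s = 1 := by rw [← map_mul, hs1, map_one]
      rwa [hφσ i s, hπeq i, hφcj i s] at h2
    have h3 : ‖φ i s‖ ^ 2 = 1 := by
      have := congrArg (‖·‖) h1
      rwa [norm_mul, Complex.norm_conj, ← sq, norm_one] at this
    have h4 : (0:ℝ) ≤ ‖φ i s‖ := norm_nonneg _
    nlinarith
  -- the final formula for d
  set zu : Fin (2*g+1) → ℂ := fun i => φ i (AdjoinRoot.mk fR uR) with hzudef
  have hzu_ne : ∀ i, zu i ≠ 0 := fun i => left_ne_zero_of_mul_eq_one (hφU i)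
  have habs_d : ∀ i, ‖d i‖ = (‖zu i‖)⁻¹ * (‖e i‖)⁻¹ := by
    intro i
    have hUabs : ‖φ i Uinv‖ = (‖zu i‖)⁻¹ := by
      have h5 := congrArg (‖·‖) (hφU i)
      rw [norm_mul, norm_one] at h5
      exact eq_inv_of_mul_eq_one_right h5
    rw [hddef]
    simp only [norm_div, norm_mul, norm_pow]
    rw [habs_s i, hUabs]
    simp [div_eq_mul_inv]
  have hd_eq : ∀ i, d i = (((‖zu i‖)⁻¹ * (‖e i‖)⁻¹ : ℝ) : ℂ) := by
    intro i
    obtain ⟨a, hane, ha⟩ := htest i 1 one_ne_zero (fun _ => by simp)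
    have hHaa := hHc a a
    have hai : φ i a = 1 := by rw [ha i]; simp
    have hpos := hHpos a hane
    have hd_is_pos_real : ∃ rr : ℝ, 0 < rr ∧ d i = (rr : ℂ) := by
      by_cases hfix : cj i = i
      · have hsum : ∑ k : Fin (2*g+1), d k * (starRingEnd ℂ) (φ k a) * φ k a = d i := by
          rw [← Finset.sum_subset (Finset.subset_univ ({i} : Finset (Fin (2*g+1))))]
          · rw [Finset.sum_singleton, hai, map_one, mul_one, mul_one]
          · intro k _ hk
            have hk1 : k ≠ i := by simpa using hk
            have hk2 : k ≠ cj i := by rw [hfix]; exact hk1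
            rw [ha k, if_neg hk1, if_neg hk2, mul_zero]
        rw [hsum] at hHaa
        exact ⟨H a a, hpos, hHaa.symm⟩
      · have hne2 : i ≠ cj i := fun h => hfix h.symm
        have haci : φ (cj i) a = 1 := by
          rw [ha, if_neg (fun h => hne2 h.symm), if_pos rfl, map_one]
        have hsum : ∑ k : Fin (2*g+1), d k * (starRingEnd ℂ) (φ k a) * φ k a
            = 2 * d i := by
          rw [← Finset.sum_subset (Finset.subset_univ ({i, cj i} : Finset (Fin (2*g+1))))]
          · rw [Finset.sum_pair hne2, hai, haci, hdcj i, hdreal i]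
            simp only [map_one, mul_one]
            ring
          · intro k _ hk
            have hk1 : k ≠ i := fun h => hk (by simp [h])
            have hk2 : k ≠ cj i := fun h => hk (by simp [h])
            rw [ha k, if_neg hk1, if_neg hk2, mul_zero]
        rw [hsum] at hHaa
        refine ⟨H a a / 2, by linarith, ?_⟩
        push_cast
        linear_combination (-1/2 : ℂ) * hHaa
    obtain ⟨rr, hrrpos, hrr⟩ := hd_is_pos_real
    have habs : ‖d i‖ = rr := by
      rw [hrr, Complex.norm_real, Real.norm_of_nonneg hrrpos.le]
    rw [hrr, ← habs, habs_d i]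
  -- final computation
  have hfinal := hHc (AdjoinRoot.mk fR uR) (AdjoinRoot.mk fR uR)
  have hterm : ∀ i : Fin (2*g+1), d i * (starRingEnd ℂ) (zu i) * zu i
      = (((‖zu i‖) / (‖e i‖) : ℝ) : ℂ) := by
    intro i
    rw [hd_eq i]
    rw [show (((‖zu i‖)⁻¹ * (‖e i‖)⁻¹ : ℝ) : ℂ)
        * (starRingEnd ℂ) (zu i) * zu i
        = (((‖zu i‖)⁻¹ * (‖e i‖)⁻¹ : ℝ) : ℂ)
          * (zu i * (starRingEnd ℂ) (zu i)) by ring]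
    rw [Complex.mul_conj, Complex.normSq_eq_norm_sq]
    push_cast
    have h1 : ‖zu i‖ ≠ 0 := by
      simpa using hzu_ne i
    have h2 : ‖e i‖ ≠ 0 := by
      simpa using he_ne i
    have h1c : ((‖zu i‖ : ℝ) : ℂ) ≠ 0 := by exact_mod_cast h1
    have h2c : ((‖e i‖ : ℝ) : ℂ) ≠ 0 := by exact_mod_cast h2
    field_simp
  rw [show ∑ i : Fin (2*g+1), d i * (starRingEnd ℂ) (φ i (AdjoinRoot.mk fR uR))
        * φ i (AdjoinRoot.mk fR uR)
      = ∑ i : Fin (2*g+1), (((‖zu i‖) / (‖e i‖) : ℝ) : ℂ) from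
    Finset.sum_congr rfl fun i _ => hterm i] at hfinal
  rw [← Complex.ofReal_sum] at hfinal
  have hreal_eq : H (AdjoinRoot.mk fR uR) (AdjoinRoot.mk fR uR)
      = ∑ i : Fin (2*g+1), (‖zu i‖) / (‖e i‖) :=
    Complex.ofReal_injective hfinal
  rw [hreal_eq]
  refine Finset.sum_congr rfl fun i _ => ?_
  congr 1
  show ‖φ i (AdjoinRoot.mk fR uR)‖ = _
  rw [hφmk, aeval_def, eval₂_eq_eval_map]

theorem stmt_9 (g : ℕ) (hg : 1 ≤ g) (f : Polynomial ℚ)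
    (hmonic : f.Monic) (hdeg : f.natDegree = 2*g+1) (hsqf : Squarefree f)
    (ω : Fin (2*g+1) → ℂ)
    (hroots : f.map (algebraMap ℚ ℂ) = ∏ i : Fin (2*g+1), (X - C (ω i)))
    (U : Polynomial ℚ) (m : ℕ) (hUdeg : U.natDegree = m)
    (hcop : IsCoprime U f)
    (τ : AdjoinRoot (f.map (algebraMap ℚ ℝ)) → ℝ)
    (hτ : ∀ p : Polynomial ℝ, p.natDegree ≤ 2*g →
      τ (AdjoinRoot.mk (f.map (algebraMap ℚ ℝ)) p) = p.coeff (2*g))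
    (Uinv : AdjoinRoot (f.map (algebraMap ℚ ℝ)))
    (hUinv : AdjoinRoot.mk (f.map (algebraMap ℚ ℝ)) (U.map (algebraMap ℚ ℝ)) * Uinv = 1)
    (H : LinearMap.BilinForm ℝ (AdjoinRoot (f.map (algebraMap ℚ ℝ))))
    (hinner : IsInnerProduct H)
    (hcompat : CompatibleWith (fun v w => ((-1:ℝ))^m * τ (v * w * Uinv)) H)
    (hcomm : CommutesWithAdjoint H
      (LinearMap.mulLeft ℝ (AdjoinRoot.root (f.map (algebraMap ℚ ℝ))))) :
    H (AdjoinRoot.mk (f.map (algebraMap ℚ ℝ)) (U.map (algebraMap ℚ ℝ)))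
        (AdjoinRoot.mk (f.map (algebraMap ℚ ℝ)) (U.map (algebraMap ℚ ℝ))) =
      ∑ i : Fin (2*g+1),
        ‖aeval (ω i) U‖ / ‖aeval (ω i) (derivative f)‖ := by
  classical
  obtain ⟨hHsym, hHpos⟩ := hinner
  obtain ⟨S, hS1, hS2⟩ := hcompat
  obtain ⟨T', hT'adj, hT'comm⟩ := hcomm
  have hfC : (f.map (algebraMap ℚ ℝ)).map (algebraMap ℝ ℂ)
      = ∏ i : Fin (2*g+1), (X - C (ω i)) := by
    rw [Polynomial.map_map, ← IsScalarTower.algebraMap_eq, hroots]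
  have hωinj : Function.Injective ω := by
    have hsep : (f.map (algebraMap ℚ ℂ)).Separable :=
      (PerfectField.separable_iff_squarefree.mpr hsqf).map
    rw [hroots] at hsep
    exact separable_prod_X_sub_C_iff.mp hsep
  have hkey := core_thm g m (f.map (algebraMap ℚ ℝ)) (hmonic.map _)
    (by rw [natDegree_map, hdeg]) ω hfC hωinj (U.map (algebraMap ℚ ℝ)) τ hτ Uinv hUinv
    H hHsym hHpos S (fun v w => hS1 v w) hS2 T'
    (fun v w => by
      have := hT'adj v w
      rwa [LinearMap.mulLeft_apply] at this)
    (fun v => by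
      have := LinearMap.ext_iff.mp hT'comm v
      simpa [LinearMap.mulLeft_apply] using this)
  rw [hkey]
  refine Finset.sum_congr rfl fun i _ => ?_
  congr 1
  · congr 1
    rw [Polynomial.map_map, ← IsScalarTower.algebraMap_eq, eval_map]
    rfl
  · congr 1
    rw [aeval_def, eval₂_eq_eval_map, ← derivative_map, hroots,
      ← Lagrange.nodal_eq Finset.univ ω,
      Lagrange.eval_nodal_derivative_eval_node_eq (Finset.mem_univ i),
      Lagrange.eval_nodal]
end

section
/- Let g ≥ 1, δ > 0, X > 0, and let f(x) = x^{2g+1} + c₂x^{2g−1} + ⋯ + c_{2g+1} ∈ ℤ[x] have nonzero discriminant, max_{2≤i≤2g+1}|c_i|^{1/i} < X, and complex roots ω₁,…,ω_{2g+1} satisfying |ω_i − ω_j| > X^{1−δ} for all i ≠ j. Let U(x) = x^m + u₁x^{m−1} + ⋯ + u_m ∈ ℚ[x] with 1 ≤ m ≤ g, having no root in common with f. Then (1/2)·log Σ_{i=1}^{2g+1} |U(ω_i)|/|f′(ω_i)| ≤ (1/2)(m − 2g + δ·g(2g+1))·log X + (1/2)·log max(1, |u₁|, …, |u_m|) + c_{g,m},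 where c_{g,m} = (1/2)·log((m+1)(2g+1)·2^{m+2g(2g−1)}). Moreover, if M ≥ 1 is the least positive integer with M·U ∈ ℤ[x], then (1/2)·log M + (1/2)·log Σ_{i=1}^{2g+1} |U(ω_i)|/|f′(ω_i)| ≤ (1/2)·h([1:u₁:⋯:u_m]) + (1/2)(m − 2g + δ·g(2g+1))·log X + c_{g,m}. -/
open Polynomial

theorem stmt_15 (g : ℕ) (hg : 1 ≤ g) (δ Xr : ℝ) (hδ : 0 < δ) (hXr : 0 < Xr)
    (f : Polynomial ℤ) (hmonic : f.Monic) (hdeg : f.natDegree = 2*g+1)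
    (hcoeff : f.coeff (2*g) = 0) (hdisc : Squarefree (f.map (algebraMap ℤ ℚ)))
    (hHt : ∀ i ∈ Finset.Icc 2 (2*g+1), |(f.coeff (2*g+1-i) : ℝ)| ^ ((1:ℝ)/(i:ℝ)) < Xr)
    (ω : Fin (2*g+1) → ℂ)
    (hroots : f.map (algebraMap ℤ ℂ) = ∏ i : Fin (2*g+1), (X - C (ω i)))
    (hsep : ∀ i j : Fin (2*g+1), i ≠ j → ‖ω i - ω j‖ > Xr ^ ((1:ℝ) - δ))
    (m : ℕ) (hm1 : 1 ≤ m) (hmg : m ≤ g)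
    (u : ℕ → ℚ) (U : Polynomial ℚ)
    (hU : U = X ^ m + ∑ i ∈ Finset.Icc 1 m, C (u i) * X ^ (m - i))
    (hnoroot : ∀ z : ℂ, aeval z U = 0 → aeval z f ≠ 0)
    (M : ℕ) (hM0 : 0 < M)
    (hMint : ∀ n : ℕ, ∃ z : ℤ, (M : ℚ) * U.coeff n = (z : ℚ))
    (hMmin : ∀ M' : ℕ, 0 < M' →
      (∀ n : ℕ, ∃ z : ℤ, (M' : ℚ) * U.coeff n = (z : ℚ)) → M ≤ M')
    (a₀ : ℕ) (ha₀ : 0 < a₀)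
    (ha₀int : ∀ i ∈ Finset.Icc 1 m, ∃ z : ℤ, (a₀ : ℚ) * u i = (z : ℚ))
    (ha₀min : ∀ b : ℕ, 0 < b →
      (∀ i ∈ Finset.Icc 1 m, ∃ z : ℤ, (b : ℚ) * u i = (z : ℚ)) → a₀ ≤ b) :
    (1/2) * Real.log (∑ i : Fin (2*g+1),
        ‖aeval (ω i) U‖ / ‖aeval (ω i) (derivative f)‖) ≤
      (1/2) * ((m : ℝ) - 2*g + δ * (g * (2*g+1) : ℝ)) * Real.log Xr
        + (1/2) * Real.log ((Finset.range (m+1)).sup'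
            (Finset.nonempty_range_iff.mpr (Nat.succ_ne_zero m))
            fun i => if i = 0 then 1 else |(u i : ℝ)|)
        + (1/2) * Real.log (((m+1) * (2*g+1) * 2^(m + 2*g*(2*g-1)) : ℝ))
    ∧
    (1/2) * Real.log (M : ℝ) + (1/2) * Real.log (∑ i : Fin (2*g+1),
        ‖aeval (ω i) U‖ / ‖aeval (ω i) (derivative f)‖) ≤
      (1/2) * Real.log ((Finset.range (m+1)).sup'
          (Finset.nonempty_range_iff.mpr (Nat.succ_ne_zero m))
          fun i => if i = 0 then (a₀ : ℝ) else |(a₀ : ℝ) * (u i : ℝ)|)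
        + (1/2) * ((m : ℝ) - 2*g + δ * (g * (2*g+1) : ℝ)) * Real.log Xr
        + (1/2) * Real.log (((m+1) * (2*g+1) * 2^(m + 2*g*(2*g-1)) : ℝ)) := by
  classical
  set S : ℝ := ∑ i : Fin (2*g+1),
      ‖aeval (ω i) U‖ / ‖aeval (ω i) (derivative f)‖ with hSdef
  set B : ℝ := (Finset.range (m+1)).sup'
      (Finset.nonempty_range_iff.mpr (Nat.succ_ne_zero m))
      (fun i => if i = 0 then 1 else |(u i : ℝ)|) with hBdef
  set B₂ : ℝ := (Finset.range (m+1)).sup'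
      (Finset.nonempty_range_iff.mpr (Nat.succ_ne_zero m))
      (fun i => if i = 0 then (a₀ : ℝ) else |(a₀ : ℝ) * (u i : ℝ)|) with hB₂def
  set C : ℝ := (((m+1) * (2*g+1) * 2^(m + 2*g*(2*g-1)) : ℝ)) with hCdef
  set E : ℝ := ((m : ℝ) - 2*g + δ * (g * (2*g+1) : ℝ)) with hEdef
  clear_value S B B₂ C E
  -- basic facts about B
  have hB1 : (1:ℝ) ≤ B := by
    have h0 : (0:ℕ) ∈ Finset.range (m+1) := Finset.mem_range.mpr (by omega)
    rw [hBdef]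
    exact le_trans (by simp) (Finset.le_sup' (fun i => if i = 0 then (1:ℝ) else |(u i : ℝ)|) h0)
  have hBpos : (0:ℝ) < B := lt_of_lt_of_le one_pos hB1
  have hBu : ∀ i ∈ Finset.Icc 1 m, |(u i : ℝ)| ≤ B := by
    intro i hi
    have hi' := Finset.mem_Icc.mp hi
    have hmem : i ∈ Finset.range (m+1) := Finset.mem_range.mpr (by omega)
    rw [hBdef]
    have h := Finset.le_sup' (fun i => if i = 0 then (1:ℝ) else |(u i : ℝ)|) hmem
    rwa [if_neg (by omega)] at h
  -- 1 ≤ Xr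
  have hX1 : 1 ≤ Xr := by
    by_contra hcon
    push_neg at hcon
    have hc0 : ∀ i ∈ Finset.Icc 2 (2*g+1), f.coeff (2*g+1-i) = 0 := by
      intro i hi
      by_contra hne
      simp only [Finset.mem_Icc] at hi
      have h1 : (1:ℝ) ≤ |((f.coeff (2*g+1-i)):ℝ)| := by
        exact_mod_cast Int.one_le_abs (by exact_mod_cast hne)
      have h2 : (1:ℝ) ≤ |((f.coeff (2*g+1-i)):ℝ)| ^ ((1:ℝ)/(i:ℝ)) :=
        Real.one_le_rpow h1 (by positivity)
      have := hHt i (Finset.mem_Icc.mpr hi)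
      linarith
    have hmap : f.map (algebraMap ℤ ℚ) = X ^ (2*g+1) := by
      ext n
      rw [coeff_map, coeff_X_pow]
      rcases lt_trichotomy n (2*g+1) with h | h | h
      · rw [if_neg (by omega)]
        rcases eq_or_lt_of_le (Nat.lt_succ_iff.mp h) with h2 | h2
        · rw [show n = 2*g by omega, hcoeff]; simp
        · have := hc0 (2*g+1-n) (Finset.mem_Icc.mpr ⟨by omega, by omega⟩)
          rw [show 2*g+1-(2*g+1-n) = n by omega] at this
          rw [this]; simp
      · rw [if_pos h]
        have h2 := hmonic.coeff_natDegree
        rw [hdeg] at h2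
        rw [← h] at h2
        rw [h2]; simp
      · rw [if_neg (by omega), coeff_eq_zero_of_natDegree_lt (by omega : f.natDegree < n)]
        simp
    rw [hmap] at hdisc
    have : IsUnit (X : ℚ[X]) := hdisc X (by
      rw [show (X:ℚ[X]) * X = X^2 from (sq X).symm]
      exact pow_dvd_pow X (by omega))
    exact Polynomial.not_isUnit_X this
  -- coefficient bounds
  have hcX : ∀ k, k < 2*g → |(f.coeff k : ℝ)| ≤ Xr ^ (2*g+1-k) := by
    intro k hk
    have hmem : 2*g+1-k ∈ Finset.Icc 2 (2*g+1) := Finset.mem_Icc.mpr ⟨by omega, by omega⟩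
    have h := hHt _ hmem
    rw [show (2*g+1-(2*g+1-k)) = k by omega] at h
    have hne : ((2*g+1-k : ℕ) : ℝ) ≠ 0 := by simp; omega
    have h2 : (|(f.coeff k : ℝ)| ^ ((1:ℝ)/((2*g+1-k : ℕ):ℝ))) ^ (2*g+1-k : ℕ)
        < Xr ^ (2*g+1-k) := pow_lt_pow_left₀ h (by positivity) (by omega)
    rw [← Real.rpow_natCast (|(f.coeff k : ℝ)| ^ ((1:ℝ)/((2*g+1-k:ℕ):ℝ))),
      ← Real.rpow_mul (abs_nonneg _), one_div, inv_mul_cancel₀ hne, Real.rpow_one] at h2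
    exact h2.le
  -- roots of f
  have hfroot : ∀ i, aeval (ω i) f = 0 := by
    intro i
    rw [aeval_def, ← eval_map, hroots, eval_prod]
    exact Finset.prod_eq_zero (Finset.mem_univ i) (by simp)
  -- root bound
  have hRω : ∀ i, ‖ω i‖ ≤ 2*Xr := by
    intro i
    by_contra hcon
    push_neg at hcon
    set r := ‖ω i‖ with hr
    have hrpos : 0 < r := lt_trans (by positivity) hcon
    have hsum := Polynomial.aeval_eq_sum_range (p := f) (ω i)
    rw [hdeg, hfroot i] at hsum
    rw [Finset.sum_range_succ, Finset.sum_range_succ] at hsum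
    have hlead : f.coeff (2*g+1) = 1 := by have := hmonic.coeff_natDegree; rwa [hdeg] at this
    rw [hlead, hcoeff] at hsum
    have hz' : (ω i) ^ (2*g+1) = -(∑ k ∈ Finset.range (2*g), f.coeff k • (ω i) ^ k) := by
      rw [zero_smul, one_smul, add_zero] at hsum
      linear_combination -hsum
    have h1 : r ^ (2*g+1) ≤ ∑ k ∈ Finset.range (2*g), Xr ^ (2*g+1-k) * r ^ k := by
      calc r ^ (2*g+1) = ‖(ω i) ^ (2*g+1)‖ := by rw [norm_pow]
      _ = ‖∑ k ∈ Finset.range (2*g), f.coeff k • (ω i) ^ k‖ := by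
          rw [hz', norm_neg]
      _ ≤ ∑ k ∈ Finset.range (2*g), ‖f.coeff k • (ω i) ^ k‖ :=
          norm_sum_le _ _
      _ ≤ ∑ k ∈ Finset.range (2*g), Xr ^ (2*g+1-k) * r ^ k := by
          refine Finset.sum_le_sum fun k hk => ?_
          rw [zsmul_eq_mul, norm_mul, Complex.norm_intCast, norm_pow]
          exact mul_le_mul_of_nonneg_right (hcX k (Finset.mem_range.mp hk)) (by positivity)
    have h2 : ∑ k ∈ Finset.range (2*g), Xr ^ (2*g+1-k) * r ^ k ≤ (1/2) * r ^ (2*g+1) := by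
      calc ∑ k ∈ Finset.range (2*g), Xr ^ (2*g+1-k) * r ^ k
          ≤ ∑ k ∈ Finset.range (2*g), (r/2) ^ (2*g+1-k) * r ^ k := by
            refine Finset.sum_le_sum fun k hk => ?_
            refine mul_le_mul_of_nonneg_right (pow_le_pow_left₀ hXr.le ?_ _) (by positivity)
            linarith
      _ = ∑ k ∈ Finset.range (2*g), (1/2:ℝ) ^ (2*g+1-k) * r ^ (2*g+1) := by
            refine Finset.sum_congr rfl fun k hk => ?_
            have hk' : k < 2*g := Finset.mem_range.mp hk
            obtain ⟨e, he⟩ : ∃ e, 2*g+1-k = e := ⟨_, rfl⟩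
            have h2 : 2*g+1 = e + k := by omega
            rw [he, h2, pow_add, div_pow, one_div_pow]
            ring
      _ ≤ ∑ k ∈ Finset.range (2*g), ((1/4:ℝ) * (1/2:ℝ) ^ (2*g-1-k)) * r ^ (2*g+1) := by
            refine Finset.sum_le_sum fun k hk => ?_
            have hk' : k < 2*g := Finset.mem_range.mp hk
            have he : (1/2:ℝ) ^ (2*g+1-k) = (1/4) * (1/2)^(2*g-1-k) := by
              rw [show (1/4:ℝ) = (1/2)^2 by norm_num, ← pow_add]
              congr 1
              omega
            rw [he]
      _ = (1/4) * (∑ k ∈ Finset.range (2*g), (1/2:ℝ) ^ (2*g-1-k)) * r ^ (2*g+1) := by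
            simp only [Finset.mul_sum, Finset.sum_mul]
      _ ≤ (1/4) * 2 * r ^ (2*g+1) := by
            refine mul_le_mul_of_nonneg_right
              (mul_le_mul_of_nonneg_left ?_ (by norm_num)) (by positivity)
            exact le_trans (le_of_eq (Finset.sum_range_reflect (fun j => (1/2:ℝ)^j) (2*g)))
              (sum_geometric_two_le _)
      _ = (1/2) * r ^ (2*g+1) := by ring
    nlinarith [pow_pos hrpos (2*g+1), le_trans h1 h2]
  -- U at the roots: upper bound and positivity
  have hUne : ∀ i, aeval (ω i) U ≠ 0 := fun i h => (hnoroot (ω i) h) (hfroot i)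
  have hUub : ∀ i, ‖aeval (ω i) U‖ ≤ (m+1) * B * (2*Xr) ^ m := by
    intro i
    have h2X : (1:ℝ) ≤ 2*Xr := by linarith
    have hzb : ∀ k, k ≤ m → ‖ω i‖ ^ k ≤ (2*Xr)^m :=
      fun k hk => le_trans (pow_le_pow_left₀ (norm_nonneg _) (hRω i) k)
        (pow_le_pow_right₀ h2X hk)
    have hev : aeval (ω i) U = (ω i) ^ m + ∑ j ∈ Finset.Icc 1 m, (u j : ℂ) * (ω i) ^ (m - j) := by
      simp [hU]
    rw [hev]
    calc ‖(ω i) ^ m + ∑ j ∈ Finset.Icc 1 m, (u j : ℂ) * (ω i) ^ (m - j)‖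
        ≤ ‖(ω i) ^ m‖
          + ‖∑ j ∈ Finset.Icc 1 m, (u j : ℂ) * (ω i) ^ (m - j)‖ :=
          norm_add_le _ _
      _ ≤ B * (2*Xr)^m + ∑ j ∈ Finset.Icc 1 m, ‖(u j : ℂ) * (ω i) ^ (m - j)‖ := by
          gcongr
          · rw [norm_pow]
            exact le_trans (hzb m le_rfl) (le_mul_of_one_le_left (by positivity) hB1)
          · exact norm_sum_le _ _
      _ ≤ B * (2*Xr)^m + ∑ j ∈ Finset.Icc 1 m, B * (2*Xr)^m := by
          gcongr with j hj
          rw [norm_mul, norm_pow]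
          have h1 : ‖(u j : ℂ)‖ ≤ B := by
            rw [show ((u j : ℚ) : ℂ) = (((u j : ℚ) : ℝ) : ℂ) by push_cast; ring,
              Complex.norm_real]
            exact hBu j hj
          have hj' := Finset.mem_Icc.mp hj
          exact mul_le_mul h1 (hzb _ (by omega)) (by positivity) (by linarith)
      _ = B * (2*Xr)^m + m * (B * (2*Xr)^m) := by
          rw [Finset.sum_const, Nat.card_Icc]
          simp [nsmul_eq_mul]
      _ = (m+1) * B * (2*Xr)^m := by ring
  -- derivative at the roots
  have hder : ∀ i, aeval (ω i) (derivative f) =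
      ∏ j ∈ Finset.univ.erase i, (ω i - ω j) := by
    intro i
    rw [aeval_def, ← eval_map, ← derivative_map, hroots,
      ← Finset.mul_prod_erase Finset.univ _ (Finset.mem_univ i), derivative_mul]
    simp [eval_prod]
  have hDlb : ∀ i, Xr ^ (((1:ℝ)-δ) * ((2*g : ℕ) : ℝ))
      ≤ ‖aeval (ω i) (derivative f)‖ := by
    intro i
    rw [hder i, norm_prod]
    have hcard : (Finset.univ.erase i).card = 2*g := by
      rw [Finset.card_erase_of_mem (Finset.mem_univ i), Finset.card_univ]
      simp
    calc Xr ^ (((1:ℝ)-δ) * ((2*g:ℕ):ℝ)) = (Xr ^ ((1:ℝ)-δ)) ^ (2*g : ℕ) := by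
          rw [← Real.rpow_natCast (Xr ^ ((1:ℝ)-δ)), ← Real.rpow_mul hXr.le]
      _ = ∏ _j ∈ Finset.univ.erase i, Xr ^ ((1:ℝ)-δ) := by
          rw [Finset.prod_const, hcard]
      _ ≤ ∏ j ∈ Finset.univ.erase i, ‖ω i - ω j‖ :=
          Finset.prod_le_prod (fun _ _ => (Real.rpow_pos_of_pos hXr _).le)
            (fun j hj => (hsep i j (Ne.symm (Finset.ne_of_mem_erase hj))).le)
  have hDpos : ∀ i, 0 < ‖aeval (ω i) (derivative f)‖ :=
    fun i => lt_of_lt_of_le (Real.rpow_pos_of_pos hXr _) (hDlb i)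
  -- sum bounds
  have hSpos : 0 < S := by
    rw [hSdef]
    refine Finset.sum_pos (fun i _ => div_pos (norm_pos_iff.mpr (hUne i)) (hDpos i)) ?_
    exact ⟨⟨0, by omega⟩, Finset.mem_univ _⟩
  have hterm : ∀ i, ‖aeval (ω i) U‖ / ‖aeval (ω i) (derivative f)‖
      ≤ ((m+1) * B * (2*Xr)^m) / Xr ^ (((1:ℝ)-δ) * ((2*g : ℕ) : ℝ)) := fun i =>
    div_le_div₀ (by positivity) (hUub i) (Real.rpow_pos_of_pos hXr _) (hDlb i)
  have hSle : S ≤ ((2*g+1 : ℕ) : ℝ) *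
      (((m+1) * B * (2*Xr)^m) / Xr ^ (((1:ℝ)-δ) * ((2*g : ℕ) : ℝ))) := by
    rw [hSdef]
    have := Finset.sum_le_card_nsmul Finset.univ
      (fun i => ‖aeval (ω i) U‖ / ‖aeval (ω i) (derivative f)‖)
      (((m+1) * B * (2*Xr)^m) / Xr ^ (((1:ℝ)-δ) * ((2*g : ℕ) : ℝ)))
      (fun i _ => hterm i)
    rw [Finset.card_univ] at this
    simpa [nsmul_eq_mul] using this
  have hg' : (1:ℝ) ≤ (g:ℝ) := by exact_mod_cast hg
  have hkey : S ≤ C * (Xr ^ E * B) := by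
    calc S ≤ ((2*g+1 : ℕ) : ℝ) *
        (((m+1) * B * (2*Xr)^m) / Xr ^ (((1:ℝ)-δ) * ((2*g : ℕ) : ℝ))) := hSle
    _ = (((2*g+1:ℕ):ℝ) * ((m:ℝ)+1) * 2^m * B) *
        (Xr ^ ((m:ℕ):ℝ) / Xr ^ (((1:ℝ)-δ) * ((2*g : ℕ) : ℝ))) := by
        rw [mul_pow, Real.rpow_natCast]
        push_cast
        ring
    _ = (((2*g+1:ℕ):ℝ) * ((m:ℝ)+1) * 2^m * B) *
        Xr ^ (((m:ℕ):ℝ) - ((1:ℝ)-δ) * ((2*g : ℕ) : ℝ)) := by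
        rw [← Real.rpow_sub hXr]
    _ ≤ (((2*g+1:ℕ):ℝ) * ((m:ℝ)+1) * 2^(m + 2*g*(2*g-1)) * B) * Xr ^ E := by
        have hexp : ((m:ℕ):ℝ) - ((1:ℝ)-δ) * ((2*g : ℕ) : ℝ) ≤ E := by
          rw [hEdef]
          push_cast
          nlinarith [mul_nonneg hδ.le (mul_nonneg (by linarith : (0:ℝ) ≤ (g:ℝ))
            (by linarith : (0:ℝ) ≤ 2*(g:ℝ)-1))]
        have h2m : (2:ℝ)^m ≤ 2^(m + 2*g*(2*g-1)) :=
          pow_le_pow_right₀ one_le_two (Nat.le_add_right _ _)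
        have hXe : Xr ^ (((m:ℕ):ℝ) - ((1:ℝ)-δ) * ((2*g : ℕ) : ℝ)) ≤ Xr ^ E :=
          Real.rpow_le_rpow_of_exponent_le hX1 hexp
        refine mul_le_mul ?_ hXe (by positivity) (by positivity)
        refine mul_le_mul_of_nonneg_right ?_ hBpos.le
        exact mul_le_mul_of_nonneg_left h2m (by positivity)
    _ = C * (Xr ^ E * B) := by
        rw [hCdef]
        push_cast
        ring
  have hCpos : (0:ℝ) < C := by rw [hCdef]; positivity
  have hlog := Real.log_le_log hSpos hkey
  rw [Real.log_mul (ne_of_gt hCpos) (by positivity),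
    Real.log_mul (by positivity) (ne_of_gt hBpos), Real.log_rpow hXr] at hlog
  have first : (1/2) * Real.log S ≤ (1/2) * E * Real.log Xr
      + (1/2) * Real.log B + (1/2) * Real.log C := by linarith
  refine ⟨first, ?_⟩
  -- coefficients of U
  have hcoefU : U.coeff m = 1 ∧ (∀ n, n < m → U.coeff n = u (m - n))
      ∧ (∀ n, m < n → U.coeff n = 0) := by
    subst hU
    refine ⟨?_, ?_, ?_⟩
    · rw [coeff_add, coeff_X_pow, if_pos rfl, finset_sum_coeff]
      rw [Finset.sum_eq_zero, add_zero]
      intro i hi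
      simp only [Finset.mem_Icc] at hi
      rw [coeff_C_mul, coeff_X_pow, if_neg (by omega), mul_zero]
    · intro n hn
      rw [coeff_add, coeff_X_pow, if_neg (by omega), finset_sum_coeff, zero_add]
      rw [Finset.sum_eq_single (m - n)]
      · rw [coeff_C_mul, coeff_X_pow, if_pos (by omega), mul_one]
      · intro i hi hne
        simp only [Finset.mem_Icc] at hi
        rw [coeff_C_mul, coeff_X_pow, if_neg (by omega), mul_zero]
      · intro h
        exact absurd (Finset.mem_Icc.mpr ⟨by omega, by omega⟩) h
    · intro n hn
      rw [coeff_add, coeff_X_pow, if_neg (by omega), finset_sum_coeff, zero_add]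
      rw [Finset.sum_eq_zero]
      intro i hi
      simp only [Finset.mem_Icc] at hi
      rw [coeff_C_mul, coeff_X_pow, if_neg (by omega), mul_zero]
  obtain ⟨hcm, hclt, hcgt⟩ := hcoefU
  -- M = a₀
  have hMa : M = a₀ := by
    refine le_antisymm (hMmin a₀ ha₀ ?_) (ha₀min M hM0 ?_)
    · intro n
      rcases lt_trichotomy n m with h | h | h
      · rw [hclt n h]
        exact ha₀int (m - n) (Finset.mem_Icc.mpr ⟨by omega, by omega⟩)
      · rw [h, hcm]
        exact ⟨a₀, by push_cast; ring⟩
      · rw [hcgt n h]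
        exact ⟨0, by push_cast; ring⟩
    · intro i hi
      have hi' := Finset.mem_Icc.mp hi
      have := hMint (m - i)
      rw [hclt (m - i) (by omega), show m - (m - i) = i by omega] at this
      exact this
  -- B₂ = a₀ * B
  have hB₂ : B₂ = (a₀ : ℝ) * B := by
    refine le_antisymm ?_ ?_
    · rw [hB₂def]
      refine Finset.sup'_le _ _ fun i hi => ?_
      by_cases h0 : i = 0
      · rw [if_pos h0]
        calc (a₀:ℝ) = (a₀:ℝ) * 1 := by ring
        _ ≤ (a₀:ℝ) * B := by
            exact mul_le_mul_of_nonneg_left hB1 (by positivity)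
      · rw [if_neg h0, abs_mul, abs_of_nonneg (by positivity : (0:ℝ) ≤ (a₀:ℝ))]
        have hi' := Finset.mem_range.mp hi
        exact mul_le_mul_of_nonneg_left (hBu i (Finset.mem_Icc.mpr ⟨by omega, by omega⟩))
          (by positivity)
    · rw [hB₂def, hBdef]
      obtain ⟨i₀, hi₀, hEq⟩ := Finset.exists_mem_eq_sup'
        ((Finset.nonempty_range_iff.mpr (Nat.succ_ne_zero m)) : (Finset.range (m+1)).Nonempty)
        (fun i => if i = 0 then (1:ℝ) else |(u i : ℝ)|)
      rw [hEq]
      have hle := Finset.le_sup'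
        (fun i => if i = 0 then ((a₀:ℕ) : ℝ) else |((a₀:ℕ) : ℝ) * (u i : ℝ)|) hi₀
      by_cases h0 : i₀ = 0
      · rw [if_pos h0] at hle ⊢
        rw [mul_one]
        exact hle
      · rw [if_neg h0] at hle ⊢
        rw [abs_mul, abs_of_nonneg (by positivity : (0:ℝ) ≤ (a₀:ℝ))] at hle
        exact hle
  have ha₀pos : (0:ℝ) < (a₀:ℝ) := by exact_mod_cast ha₀
  have hlogB₂ : Real.log B₂ = Real.log (a₀:ℝ) + Real.log B := by
    rw [hB₂, Real.log_mul (ne_of_gt ha₀pos) (ne_of_gt hBpos)]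
  have hlogM : Real.log (M:ℝ) = Real.log (a₀:ℝ) := by rw [hMa]
  linarith
end
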